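/- arXiv:2104.11822 — 7 statements merged into one kernel-verified Lean document; each statement's English description precedes it below -/
import Mathlib

section
/- Let κ be an infinite cardinal and k ≥ 1, and order [κ]^k colexicographically. Then for every α < κ, the set [α+1]^k of k-element subsets of α+1 is an initial segment of ([κ]^k, ≼) whose order type γ_k(α) is strictly less than κ. -/
open Cardinal Ordinal Filter Set
open scoped symmDiff

private lemma colex_min_aux {β : Type*} [LinearOrder β] [WellFoundedLT β] :
    ∀ (b : WithTop β) (S : Set (Finset β)), S.Nonempty →
      (∀ s ∈ S, ∀ x ∈ s, (x : WithTop β) < b) →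
      ∃ m ∈ S, ∀ u ∈ S, ¬ toColex u < toColex m := by
  intro b
  induction b using WellFoundedLT.induction with
  | ind b IH =>
    intro S hS hbd
    classical
    by_cases hem : (∅ : Finset β) ∈ S
    · refine ⟨∅, hem, fun u hu hlt => ?_⟩
      rw [Finset.Colex.toColex_empty] at hlt
      exact not_lt_bot hlt
    · -- every member of S is nonempty
      have hne : ∀ s ∈ S, s.Nonempty := by
        intro s hs
        rcases Finset.eq_empty_or_nonempty s with rfl | h
        · exact absurd hs hem
        · exact h
      -- set of max' values
      set B : Set β := {x | ∃ s ∈ S, s.max = (x : WithBot β)} with hB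
      have hBne : B.Nonempty := by
        obtain ⟨s₀, hs₀⟩ := hS
        exact ⟨(s₀.max' (hne s₀ hs₀)), s₀, hs₀, (Finset.coe_max' _).symm⟩
      obtain ⟨b₀, ⟨s₀, hs₀S, hs₀max⟩, hb₀min⟩ :=
        (wellFounded_lt (α := β)).has_min B hBne
      have hb₀s₀ : b₀ ∈ s₀ := Finset.mem_of_max hs₀max
      have hb₀b : (b₀ : WithTop β) < b := hbd s₀ hs₀S b₀ hb₀s₀
      -- the subfamily whose max is b₀, with b₀ erased
      set T : Set (Finset β) := (fun s => s.erase b₀) '' {s ∈ S | s.max = (b₀ : WithBot β)}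
        with hT
      have hTne : T.Nonempty := ⟨s₀.erase b₀, ⟨s₀, ⟨hs₀S, hs₀max⟩, rfl⟩⟩
      have hTbd : ∀ t ∈ T, ∀ x ∈ t, (x : WithTop β) < (b₀ : WithTop β) := by
        rintro t ⟨s, ⟨hsS, hsmax⟩, rfl⟩ x hx
        have hxs : x ∈ s := Finset.mem_of_mem_erase hx
        have hxle : x ≤ b₀ := by
          have := Finset.le_max hxs
          rw [hsmax] at this
          exact_mod_cast this
        have hxne : x ≠ b₀ := Finset.ne_of_mem_erase hx
        exact_mod_cast lt_of_le_of_ne hxle hxne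
      obtain ⟨t', ⟨m, ⟨hmS, hmmax⟩, rfl⟩, ht'min⟩ := IH (b₀ : WithTop β) hb₀b T hTne hTbd
      have hb₀m : b₀ ∈ m := Finset.mem_of_max hmmax
      refine ⟨m, hmS, fun u hu hlt => ?_⟩
      -- all elements of m are ≤ b₀
      have hmle : ∀ x ∈ m, x ≤ b₀ := by
        intro x hx
        have := Finset.le_max hx
        rw [hmmax] at this
        exact_mod_cast this
      -- all elements of u are ≤ b₀
      have hule : ∀ x ∈ u, x ≤ b₀ := Finset.Colex.forall_le_mono hlt.le hmle
      -- u's max is exactly b₀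
      have humax : u.max = (b₀ : WithBot β) := by
        have huB : u.max' (hne u hu) ∈ B := ⟨u, hu, (Finset.coe_max' _).symm⟩
        have h1 : u.max' (hne u hu) ≤ b₀ := hule _ (Finset.max'_mem _ _)
        have h2 : ¬ u.max' (hne u hu) < b₀ := hb₀min _ huB
        have : u.max' (hne u hu) = b₀ := le_antisymm h1 (not_lt.1 h2)
        rw [← Finset.coe_max' (hne u hu), this]
      have hb₀u : b₀ ∈ u := Finset.mem_of_max humax
      -- compare erased sets
      have herase : toColex (u.erase b₀) < toColex (m.erase b₀) := by
        rw [Finset.erase_eq, Finset.erase_eq]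
        rw [Finset.Colex.toColex_sdiff_lt_toColex_sdiff
          (Finset.singleton_subset_iff.2 hb₀u) (Finset.singleton_subset_iff.2 hb₀m)]
        exact hlt
      exact ht'min (u.erase b₀) ⟨u, ⟨hu, humax⟩, rfl⟩ herase

private lemma colex_wf {β : Type*} [LinearOrder β] [WellFoundedLT β] :
    WellFounded (fun s t : Finset β =>
      toColex s < toColex t) := by
  rw [WellFounded.wellFounded_iff_has_min]
  intro S hS
  obtain ⟨m, hm, hmin⟩ := colex_min_aux (β := β) ⊤ S hS
    (fun s _ x _ => WithTop.coe_lt_top x)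
  exact ⟨m, hm, hmin⟩

/-- For every α < κ, the set [α+1]^k of k-element subsets of α+1 is an initial
segment of ([κ]^k, ≼) (colexicographic order) whose order type γ_k(α) is strictly less
than κ. -/
theorem stmt_5 (κ : Cardinal.{0}) (hκ : Cardinal.aleph0 ≤ κ) (k : ℕ) (hk : 1 ≤ k)
    (a : κ.ord.ToType) :
    (∀ s t : Finset κ.ord.ToType, s.card = k → t.card = k →
      (∀ x ∈ s, x ≤ a) → toColex t < toColex s → ∀ x ∈ t, x ≤ a) ∧
    ∃ hwo : IsWellOrder {s : Finset κ.ord.ToType // s.card = k ∧ ∀ x ∈ s, x ≤ a}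
        (fun s t => toColex s.1 < toColex t.1),
      @Ordinal.type {s : Finset κ.ord.ToType // s.card = k ∧ ∀ x ∈ s, x ≤ a}
        (fun s t => toColex s.1 < toColex t.1) hwo < κ.ord := by
  classical
  have htri : IsTrichotomous {s : Finset κ.ord.ToType // s.card = k ∧ ∀ x ∈ s, x ≤ a}
      (fun s t => toColex s.1 < toColex t.1) := by
    constructor
    intro x y
    rcases lt_trichotomy (toColex x.1) (toColex y.1) with h | h | h
    · exact fun h1 _ => absurd h h1
    · exact fun _ _ => Subtype.ext (toColex_inj.1 h)
    · exact fun _ h2 => absurd h h2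
  have htrans : IsTrans {s : Finset κ.ord.ToType // s.card = k ∧ ∀ x ∈ s, x ≤ a}
      (fun s t => toColex s.1 < toColex t.1) :=
    ⟨fun _ _ _ h1 h2 => lt_trans h1 h2⟩
  have hwf : IsWellFounded {s : Finset κ.ord.ToType // s.card = k ∧ ∀ x ∈ s, x ≤ a}
      (fun s t => toColex s.1 < toColex t.1) :=
    ⟨InvImage.wf
      (r := fun s t : Finset κ.ord.ToType =>
        toColex s < toColex t)
      (fun s : {s : Finset κ.ord.ToType // s.card = k ∧ ∀ x ∈ s, x ≤ a} => s.1) colex_wf⟩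
  have hwo : IsWellOrder {s : Finset κ.ord.ToType // s.card = k ∧ ∀ x ∈ s, x ≤ a}
      (fun s t => toColex s.1 < toColex t.1) := { }
  refine ⟨fun s t _ _ hsa hlt => Finset.Colex.forall_le_mono hlt.le hsa, hwo, ?_⟩
  rw [Cardinal.lt_ord]
  set Sub := {s : Finset κ.ord.ToType // s.card = k ∧ ∀ x ∈ s, x ≤ a} with hSub
  show #Sub < κ
  -- inject into finsets of Iic a
  have hinj : Function.Injective (fun s : Sub => s.1.subtype (· ≤ a)) := by
    intro s t h
    apply Subtype.ext
    have h2 := congrArg (Finset.map (Function.Embedding.subtype (· ≤ a))) h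
    simpa [Finset.subtype_map, Finset.filter_true_of_mem s.2.2,
      Finset.filter_true_of_mem t.2.2] using h2
  have hle : #Sub ≤ #(Finset {x : κ.ord.ToType // x ≤ a}) := Cardinal.mk_le_of_injective hinj
  refine lt_of_le_of_lt hle ?_
  -- cardinality of {x // x ≤ a} is < κ
  have hIic : #{x : κ.ord.ToType // x ≤ a} < κ := by
    have hinj2 : Function.Injective (fun x : {x : κ.ord.ToType // x ≤ a} =>
        if h : x.1 < a then (some ⟨x.1, h⟩ : Option {x : κ.ord.ToType // x < a}) else none) := by
      intro x y hxy
      by_cases hx : x.1 < a <;> by_cases hy : y.1 < a <;> simp [hx, hy] at hxy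
      · exact Subtype.ext hxy
      · exact Subtype.ext ((x.2.lt_or_eq.resolve_left hx).trans
          ((y.2.lt_or_eq.resolve_left hy).symm))
    have h1 : #{x : κ.ord.ToType // x ≤ a} ≤ #{x : κ.ord.ToType // x < a} + 1 := by
      have := Cardinal.mk_le_of_injective hinj2
      rwa [Cardinal.mk_option] at this
    have h2 : #{x : κ.ord.ToType // x < a} < κ := mk_Iio_ord_toType a
    exact lt_of_le_of_lt h1 (Cardinal.add_lt_of_lt hκ h2 (lt_of_lt_of_le one_lt_aleph0 hκ))
  by_cases hfin : Finite {x : κ.ord.ToType // x ≤ a}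
  · have := Fintype.ofFinite {x : κ.ord.ToType // x ≤ a}
    exact lt_of_lt_of_le (Cardinal.lt_aleph0_of_finite _) hκ
  · have : Infinite {x : κ.ord.ToType // x ≤ a} := not_finite_iff_infinite.1 hfin
    rwa [Cardinal.mk_finset_of_infinite]
end

section
/- Let κ be a measurable cardinal and U a normal κ-complete ultrafilter on κ. Then for every k ≥ 1, the sets [A]^k for A ∈ U form a base of the symmetric product ultrafilter [⊗^k U] on [κ]^k; that is, every member of [⊗^k U] contains [A]^k for some A ∈ U. -/
open Cardinal Ordinal Filter Set

/-- The symmetric product of filters, defined recursively by peeling off the *last* factor;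
the list argument is the list of factors in reverse order (last factor first). -/
def symFam {T : Type*} [LinearOrder T] : List (Filter T) → Set (Set (Finset T))
  | [] => ∅
  | [F] => {A | {b : T | {b} ∈ A} ∈ F}
  | F :: G :: Gs =>
      {A | {s : Finset T | {b : T | (∀ x ∈ s, x < b) ∧ insert b s ∈ A} ∈ F} ∈ symFam (G :: Gs)}

lemma aux_mk_Iic_lt (κ : Cardinal.{0}) (hκ : Cardinal.aleph0 < κ) (a : κ.ord.ToType) :
    #(Set.Iic a) < κ := by
  have h1 : #(Set.Iio a) < κ := Cardinal.mk_Iio_ord_toType a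
  have h2 : Set.Iic a = insert a (Set.Iio a) := by
    ext x; simp [le_iff_lt_or_eq, or_comm]
  rw [h2]
  calc #(insert a (Set.Iio a) : Set _) ≤ #(Set.Iio a) + 1 := Cardinal.mk_insert_le
    _ < κ := Cardinal.add_lt_of_lt hκ.le h1 (lt_of_lt_of_le Cardinal.one_lt_aleph0 hκ.le)

lemma aux_mk_finsets_lt (κ : Cardinal.{0}) (hκ : Cardinal.aleph0 < κ) (a : κ.ord.ToType) :
    #{s : Finset κ.ord.ToType | ↑s ⊆ Set.Iic a} < κ := by
  classical
  have hinj : Function.Injective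
      (fun s : {s : Finset κ.ord.ToType | (↑s : Set _) ⊆ Set.Iic a} =>
        (s.1.subtype (· ∈ Set.Iic a))) := by
    rintro ⟨s, hs⟩ ⟨t, ht⟩ h
    dsimp only at h
    ext1
    have hs' : s.filter (· ∈ Set.Iic a) = s := by
      apply Finset.filter_true_of_mem; intro x hx; exact hs hx
    have ht' : t.filter (· ∈ Set.Iic a) = t := by
      apply Finset.filter_true_of_mem; intro x hx; exact ht hx
    calc s = s.filter (· ∈ Set.Iic a) := hs'.symm
      _ = (s.subtype (· ∈ Set.Iic a)).map (Function.Embedding.subtype _) := (Finset.subtype_map _).symm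
      _ = (t.subtype (· ∈ Set.Iic a)).map (Function.Embedding.subtype _) := by rw [h]
      _ = t.filter (· ∈ Set.Iic a) := Finset.subtype_map _
      _ = t := ht'
  have h1 : #{s : Finset κ.ord.ToType | (↑s : Set _) ⊆ Set.Iic a}
      ≤ #(Finset (Set.Iic a)) := Cardinal.mk_le_of_injective hinj
  refine h1.trans_lt ?_
  by_cases hfin : (Set.Iic a).Finite
  · have : Finite (Set.Iic a) := hfin
    have := Fintype.ofFinite (Set.Iic a)
    exact lt_of_lt_of_le (Cardinal.lt_aleph0_of_finite _) hκ.le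
  · have : Infinite (Set.Iic a) := Set.infinite_coe_iff.mpr hfin
    rw [Cardinal.mk_finset_of_infinite]
    exact aux_mk_Iic_lt κ hκ a

lemma aux_main (κ : Cardinal.{0}) (hκ : Cardinal.aleph0 < κ)
    (U : Ultrafilter κ.ord.ToType)
    (hcomplete : ∀ S : Set (Set κ.ord.ToType), #S < κ → (∀ s ∈ S, s ∈ U) → ⋂₀ S ∈ U)
    (hnormal : ∀ X : κ.ord.ToType → Set κ.ord.ToType,
      (∀ a, X a ∈ U) → {a | ∀ b < a, a ∈ X b} ∈ U) :
    ∀ k : ℕ, 1 ≤ k → ∀ W ∈ symFam (List.replicate k (U : Filter κ.ord.ToType)),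
      ∃ A ∈ U, ∀ s : Finset κ.ord.ToType, s.card = k → (∀ x ∈ s, x ∈ A) → s ∈ W := by
  intro k hk
  induction k, hk using Nat.le_induction with
  | base =>
    intro W hW
    simp only [List.replicate, symFam, Set.mem_setOf_eq] at hW
    refine ⟨{b | ({b} : Finset _) ∈ W}, hW, ?_⟩
    intro s hs hsub
    obtain ⟨b, rfl⟩ := Finset.card_eq_one.mp hs
    exact hsub b (Finset.mem_singleton_self b)
  | succ n hn IH =>
    intro W hW
    obtain ⟨j, rfl⟩ : ∃ j, n = j + 1 := ⟨n - 1, (Nat.succ_pred_eq_of_pos hn).symm⟩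
    rw [List.replicate_succ, List.replicate_succ] at hW
    simp only [symFam, Set.mem_setOf_eq] at hW
    rw [← List.replicate_succ] at hW
    obtain ⟨A₀, hA₀U, hA₀⟩ := IH _ hW
    classical
    set B : Finset κ.ord.ToType → Set κ.ord.ToType :=
      fun s => {b | (∀ x ∈ s, x < b) ∧ insert b s ∈ W} with hB
    set X : κ.ord.ToType → Set κ.ord.ToType :=
      fun a => ⋂₀ (B '' {s | s.card = j + 1 ∧ ∀ x ∈ s, x ∈ A₀ ∧ x ≤ a}) with hX
    have hXU : ∀ a, X a ∈ U := by
      intro a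
      apply hcomplete
      · refine lt_of_le_of_lt (Cardinal.mk_image_le) ?_
        refine lt_of_le_of_lt (Cardinal.mk_le_mk_of_subset
          (t := {s : Finset κ.ord.ToType | (↑s : Set _) ⊆ Set.Iic a}) ?_) ?_
        · rintro s ⟨-, hs2⟩ x hx
          exact (hs2 x hx).2
        · exact aux_mk_finsets_lt κ hκ a
      · rintro _ ⟨s, ⟨hcard, hsub⟩, rfl⟩
        exact hA₀ s hcard (fun x hx => (hsub x hx).1)
    have hD := hnormal X hXU
    refine ⟨A₀ ∩ {a | ∀ b < a, a ∈ X b}, U.inter_mem hA₀U hD, ?_⟩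
    intro t htcard htsub
    have htne : t.Nonempty := Finset.card_pos.mp (by omega)
    set b := t.max' htne with hbdef
    have hbt : b ∈ t := t.max'_mem htne
    set s := t.erase b with hsdef
    have hscard : s.card = j + 1 := by
      rw [hsdef, Finset.card_erase_of_mem hbt, htcard]; omega
    have hslt : ∀ x ∈ s, x < b := by
      intro x hx
      exact lt_of_le_of_ne (t.le_max' x (Finset.mem_of_mem_erase hx))
        (Finset.ne_of_mem_erase hx)
    have hsne : s.Nonempty := Finset.card_pos.mp (by omega)
    set m := s.max' hsne with hmdef
    have hmb : m < b := hslt m (s.max'_mem hsne)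
    have hbX : b ∈ X m := (htsub b hbt).2 m hmb
    have hmem : B s ∈ B '' {s | s.card = j + 1 ∧ ∀ x ∈ s, x ∈ A₀ ∧ x ≤ m} := by
      refine ⟨s, ⟨hscard, fun x hx => ⟨(htsub x (Finset.mem_of_mem_erase hx)).1,
        s.le_max' x hx⟩⟩, rfl⟩
    have hbBs : b ∈ B s := hbX _ hmem
    have : insert b s ∈ W := hbBs.2
    rwa [hsdef, Finset.insert_erase hbt] at this

/-- For a normal κ-complete (nonprincipal) ultrafilter U on a measurable
cardinal κ and every k ≥ 1, the sets [A]^k, A ∈ U, form a base of the symmetric product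
[⊗^k U]: every member of [⊗^k U] contains [A]^k for some A ∈ U. -/
theorem stmt_12 (κ : Cardinal.{0}) (hκ : Cardinal.aleph0 < κ)
    (U : Ultrafilter κ.ord.ToType)
    (hnonprincipal : ∀ x, U ≠ pure x)
    (hcomplete : ∀ S : Set (Set κ.ord.ToType), #S < κ → (∀ s ∈ S, s ∈ U) → ⋂₀ S ∈ U)
    (hnormal : ∀ X : κ.ord.ToType → Set κ.ord.ToType,
      (∀ a, X a ∈ U) → {a | ∀ b < a, a ∈ X b} ∈ U)
    (k : ℕ) (hk : 1 ≤ k) :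
    ∀ W ∈ symFam (List.replicate k (U : Filter κ.ord.ToType)),
      ∃ A ∈ U, {s : Finset κ.ord.ToType | s.card = k ∧ ∀ x ∈ s, x ∈ A} ⊆ W := by
  intro W hW
  obtain ⟨A, hAU, hA⟩ := aux_main κ hκ U hcomplete hnormal k hk W hW
  exact ⟨A, hAU, fun s hs => hA s hs.1 hs.2⟩
end

section
/- Let U be a normal κ-complete nonprincipal ultrafilter on a measurable cardinal κ. For every partition of [κ]^k into two pieces (k ≥ 1), there exists A ∈ U such that [A]^k is contained in one piece (Rowbottom's theorem for finite exponents). -/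
open Cardinal Ordinal Filter Set

private lemma rowbottom_aux {α : Type*} [LinearOrder α] (U : Ultrafilter α)
    (hnormal : ∀ X : α → Set α, (∀ a, X a ∈ U) → {a | ∀ b < a, a ∈ X b} ∈ U) :
    ∀ (k : ℕ) (P : Set (Finset α)),
      ∃ A ∈ U,
        (∀ s : Finset α, s.card = k → (∀ x ∈ s, x ∈ A) → s ∈ P) ∨
        (∀ s : Finset α, s.card = k → (∀ x ∈ s, x ∈ A) → s ∉ P) := by
  intro k
  induction k with
  | zero =>
    intro P
    by_cases h : (∅ : Finset α) ∈ P
    · exact ⟨Set.univ, Filter.univ_mem, Or.inl (fun s hs _ => by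
        rw [Finset.card_eq_zero] at hs; subst hs; exact h)⟩
    · exact ⟨Set.univ, Filter.univ_mem, Or.inr (fun s hs _ => by
        rw [Finset.card_eq_zero] at hs; subst hs; exact h)⟩
  | succ k ih =>
    intro P
    choose A hAU hhom using fun a : α => ih {s | insert a s ∈ P}
    set B : Set α := {a | ∀ s : Finset α, s.card = k → (∀ x ∈ s, x ∈ A a) →
      insert a s ∈ P} with hB
    set D : Set α := {a | ∀ b < a, a ∈ A b} with hD
    have hDU : D ∈ U := hnormal A hAU
    -- main step: for a set s ⊆ D of card k+1, with min a, the rest lies in A a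
    have main : ∀ (s : Finset α), s.card = k + 1 → (∀ x ∈ s, x ∈ D) →
        ∃ (a : α) (t : Finset α), a ∈ s ∧ t.card = k ∧ (∀ x ∈ t, x ∈ A a) ∧
          insert a t = s := by
      intro s hs hsD
      have hne : s.Nonempty := Finset.card_pos.mp (by omega)
      set a := s.min' hne with ha
      refine ⟨a, s.erase a, s.min'_mem hne, ?_, ?_, Finset.insert_erase (s.min'_mem hne)⟩
      · rw [Finset.card_erase_of_mem (s.min'_mem hne), hs]; omega
      · intro x hx
        have hxs : x ∈ s := Finset.mem_of_mem_erase hx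
        have hax : a < x :=
          lt_of_le_of_ne (s.min'_le x hxs) (Ne.symm (Finset.ne_of_mem_erase hx))
        exact hsD x hxs _ hax
    rcases U.mem_or_compl_mem B with hBU | hBU
    · refine ⟨D ∩ B, Filter.inter_mem hDU hBU, Or.inl ?_⟩
      intro s hs hsub
      obtain ⟨a, t, has, htc, htA, hins⟩ := main s hs (fun x hx => (hsub x hx).1)
      rw [← hins]
      exact (hsub a has).2 t htc htA
    · refine ⟨D ∩ Bᶜ, Filter.inter_mem hDU hBU, Or.inr ?_⟩
      intro s hs hsub
      obtain ⟨a, t, has, htc, htA, hins⟩ := main s hs (fun x hx => (hsub x hx).1)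
      rw [← hins]
      have hna : a ∉ B := (hsub a has).2
      rcases hhom a with h | h
      · exact absurd (fun s hc hsub' => h s hc hsub') hna
      · exact h t htc htA

/-- Rowbottom's theorem for finite exponents: For a normal κ-complete
nonprincipal ultrafilter U on a measurable cardinal κ and every partition of [κ]^k into
two pieces (k ≥ 1), there is A ∈ U with [A]^k contained in one piece. -/
theorem stmt_13 (κ : Cardinal.{0}) (hκ : Cardinal.aleph0 < κ)
    (U : Ultrafilter κ.ord.ToType)
    (hnonprincipal : ∀ x, U ≠ pure x)
    (hcomplete : ∀ S : Set (Set κ.ord.ToType), #S < κ → (∀ s ∈ S, s ∈ U) → ⋂₀ S ∈ U)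
    (hnormal : ∀ X : κ.ord.ToType → Set κ.ord.ToType,
      (∀ a, X a ∈ U) → {a | ∀ b < a, a ∈ X b} ∈ U)
    (k : ℕ) (hk : 1 ≤ k) (P : Set (Finset κ.ord.ToType)) :
    ∃ A ∈ U,
      (∀ s : Finset κ.ord.ToType, s.card = k → (∀ x ∈ s, x ∈ A) → s ∈ P) ∨
      (∀ s : Finset κ.ord.ToType, s.card = k → (∀ x ∈ s, x ∈ A) → s ∉ P) :=
  rowbottom_aux U hnormal k P
end

section
/- Let κ be a measurable cardinal and U a normal κ-complete nonprincipal ultrafilter on κ. Then the topological group B(κ_U) of finite subsets of κ under symmetric difference, with neighborhood base at zero {[A]^{<ω} : A ∈ U}, is extremally disconnected: the closure of every open set is open. -/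
open Cardinal Ordinal Filter Set
open scoped symmDiff Topology

/-- For a normal κ-complete nonprincipal ultrafilter U on a measurable
cardinal κ, the topological group B(κ_U) is extremally disconnected: the closure of every
open set is open. -/
theorem stmt_14 (κ : Cardinal.{0}) (hκ : Cardinal.aleph0 < κ)
    (U : Ultrafilter κ.ord.ToType)
    (hnonprincipal : ∀ x, U ≠ pure x)
    (hcomplete : ∀ S : Set (Set κ.ord.ToType), #S < κ → (∀ s ∈ S, s ∈ U) → ⋂₀ S ∈ U)
    (hnormal : ∀ X : κ.ord.ToType → Set κ.ord.ToType,
      (∀ a, X a ∈ U) → {a | ∀ b < a, a ∈ X b} ∈ U)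
    (τ : TopologicalSpace (Finset κ.ord.ToType))
    (hcont : @Continuous (Finset κ.ord.ToType × Finset κ.ord.ToType) (Finset κ.ord.ToType)
      (@instTopologicalSpaceProd _ _ τ τ) τ (fun p => p.1 ∆ p.2))
    (hbasis : (@nhds _ τ ∅).HasBasis (· ∈ U)
      (fun A => {s : Finset κ.ord.ToType | ∀ x ∈ s, x ∈ A})) :
    ∀ V : Set (Finset κ.ord.ToType), @IsOpen _ τ V → @IsOpen _ τ (@closure _ τ V) := by
  letI := τ
  intro V hV
  -- no singleton is in U
  have hsingle : ∀ x : κ.ord.ToType, ({x} : Set κ.ord.ToType) ∉ U := by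
    intro x hx
    obtain ⟨y, hy, hUy⟩ := Ultrafilter.eq_pure_of_finite_mem (Set.finite_singleton x) hx
    exact hnonprincipal y hUy
  -- complements of small sets are in U
  have hsmall : ∀ S : Set κ.ord.ToType, #S < κ → Sᶜ ∈ U := by
    intro S hS
    have hcard : #((fun x => ({x}ᶜ : Set κ.ord.ToType)) '' S) < κ :=
      lt_of_le_of_lt (Cardinal.mk_image_le) hS
    have hmem : ∀ s ∈ (fun x => ({x}ᶜ : Set κ.ord.ToType)) '' S, s ∈ U := by
      rintro _ ⟨x, hx, rfl⟩
      exact Ultrafilter.compl_mem_iff_notMem.2 (hsingle x)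
    have := hcomplete _ hcard hmem
    have heq : ⋂₀ ((fun x => ({x}ᶜ : Set κ.ord.ToType)) '' S) = Sᶜ := by
      ext y
      simp only [Set.mem_sInter, Set.mem_image, forall_exists_index, and_imp,
        Set.mem_compl_iff, Set.mem_singleton_iff]
      constructor
      · intro h hy
        exact h _ y hy rfl rfl
      · rintro h _ x hx rfl hxy
        exact h (hxy ▸ hx)
    rwa [heq] at this
  -- tails are in U
  have htail : ∀ β : κ.ord.ToType, Set.Ioi β ∈ U := by
    intro β
    have h1 : #(Set.Iic β) < κ := by
      rw [← Set.Iio_insert]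
      refine lt_of_le_of_lt (Cardinal.mk_insert_le) ?_
      exact Cardinal.add_lt_of_lt hκ.le (Cardinal.mk_Iio_ord_toType β)
        (lt_trans Cardinal.one_lt_aleph0 hκ)
    have := hsmall _ h1
    rwa [Set.compl_Iic] at this
  have htails : ∀ s : Finset κ.ord.ToType, {α | ∀ x ∈ s, x < α} ∈ U := by
    intro s
    have h1 : (⋂ x ∈ (s : Set κ.ord.ToType), Set.Ioi x) ∈ U :=
      (Filter.biInter_mem s.finite_toSet).2 fun x _ => htail x
    have heq : (⋂ x ∈ (s : Set κ.ord.ToType), Set.Ioi x) = {α | ∀ x ∈ s, x < α} := by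
      ext α; simp [Set.mem_iInter]
    rwa [heq] at h1
  -- translations
  have hf_cont : ∀ s : Finset κ.ord.ToType, Continuous (fun w => s ∆ w) :=
    fun s => hcont.comp (continuous_const.prodMk continuous_id)
  have hsd_empty : ∀ s : Finset κ.ord.ToType, s ∆ (∅ : Finset κ.ord.ToType) = s := by
    intro s
    simpa [Finset.bot_eq_empty] using (symmDiff_bot s)
  have hsd_self : ∀ s : Finset κ.ord.ToType, s ∆ s = (∅ : Finset κ.ord.ToType) := by
    intro s
    simpa [Finset.bot_eq_empty] using (symmDiff_self s)
  have hmap : ∀ s : Finset κ.ord.ToType, Filter.map (fun w => s ∆ w) (𝓝 ∅) = 𝓝 s := by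
    intro s
    apply le_antisymm
    · have h := (hf_cont s).tendsto (∅ : Finset κ.ord.ToType)
      rwa [hsd_empty s] at h
    · have h1 : Filter.map (fun w => s ∆ w) (𝓝 s) ≤ 𝓝 (∅ : Finset κ.ord.ToType) := by
        have h := (hf_cont s).tendsto s
        rwa [hsd_self s] at h
      calc 𝓝 s = Filter.map (fun w => s ∆ w) (Filter.map (fun w => s ∆ w) (𝓝 s)) := by
                  rw [Filter.map_map]
                  have : ((fun w => s ∆ w) ∘ (fun w => s ∆ w)) = id := by
                    funext w; simp [Function.comp, symmDiff_symmDiff_cancel_left]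
                  rw [this, Filter.map_id]
        _ ≤ Filter.map (fun w => s ∆ w) (𝓝 ∅) := Filter.map_mono h1
  have hnb : ∀ s : Finset κ.ord.ToType, (𝓝 s).HasBasis (· ∈ U)
      (fun A => (fun w => s ∆ w) '' {w : Finset κ.ord.ToType | ∀ x ∈ w, x ∈ A}) :=
    fun s => (hmap s) ▸ (hbasis.map _)
  -- closure membership
  have hclmem : ∀ s : Finset κ.ord.ToType, s ∈ closure V ↔
      ∀ A ∈ U, ∃ w : Finset κ.ord.ToType, (∀ x ∈ w, x ∈ A) ∧ s ∆ w ∈ V := by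
    intro s
    rw [mem_closure_iff_nhds_basis (hnb s)]
    constructor
    · intro h A hA
      obtain ⟨y, hyV, w, hw, rfl⟩ := h A hA
      exact ⟨w, hw, hyV⟩
    · intro h A hA
      obtain ⟨w, hw, hwV⟩ := h A hA
      exact ⟨s ∆ w, hwV, w, hw, rfl⟩
  -- neighborhood membership
  have hmemnhds : ∀ (W : Set (Finset κ.ord.ToType)) (s : Finset κ.ord.ToType),
      W ∈ 𝓝 s ↔ ∃ A ∈ U, ∀ w : Finset κ.ord.ToType, (∀ x ∈ w, x ∈ A) → s ∆ w ∈ W := by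
    intro W s
    rw [(hnb s).mem_iff]
    constructor
    · rintro ⟨A, hA, hsub⟩
      exact ⟨A, hA, fun w hw => hsub ⟨w, hw, rfl⟩⟩
    · rintro ⟨A, hA, h⟩
      exact ⟨A, hA, by rintro _ ⟨w, hw, rfl⟩; exact h w hw⟩
  -- strong diagonal intersection
  have hdiag : ∀ C : Finset κ.ord.ToType → Set κ.ord.ToType, (∀ u, C u ∈ U) →
      ∃ A ∈ U, ∀ a ∈ A, ∀ u : Finset κ.ord.ToType, (∀ x ∈ u, x < a) → a ∈ C u := by
    intro C hC
    have hsmallset : ∀ b : κ.ord.ToType, #{u : Finset κ.ord.ToType | ∀ x ∈ u, x ≤ b} < κ := by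
      intro b
      classical
      have hinj : Function.Injective
          (fun u : {u : Finset κ.ord.ToType | ∀ x ∈ u, x ≤ b} =>
            (u : Finset κ.ord.ToType).subtype (· ∈ Set.Iic b)) := by
        rintro ⟨u, hu⟩ ⟨v, hv⟩ h
        have hu' : (u.subtype (· ∈ Set.Iic b)).map (Function.Embedding.subtype _) = u := by
          rw [Finset.subtype_map]
          exact Finset.filter_true_of_mem fun x hx => hu x hx
        have hv' : (v.subtype (· ∈ Set.Iic b)).map (Function.Embedding.subtype _) = v := by
          rw [Finset.subtype_map]
          exact Finset.filter_true_of_mem fun x hx => hv x hx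
        apply Subtype.ext
        simp only at h
        show u = v
        rw [← hu', ← hv', h]
      have h1 : #{u : Finset κ.ord.ToType | ∀ x ∈ u, x ≤ b}
          ≤ #(Finset (Set.Iic b)) := Cardinal.mk_le_of_injective hinj
      have h2 : #(Finset (Set.Iic b)) < κ := by
        rcases finite_or_infinite (Set.Iic b) with hfin | hinf
        · haveI := Fintype.ofFinite (Set.Iic b)
          exact lt_trans (Cardinal.lt_aleph0_of_finite _) hκ
        · rw [Cardinal.mk_finset_of_infinite]
          rw [← Set.Iio_insert]
          refine lt_of_le_of_lt (Cardinal.mk_insert_le) ?_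
          exact Cardinal.add_lt_of_lt hκ.le (Cardinal.mk_Iio_ord_toType b)
            (lt_trans Cardinal.one_lt_aleph0 hκ)
      exact lt_of_le_of_lt h1 h2
    have hX : ∀ b : κ.ord.ToType, ⋂₀ (C '' {u | ∀ x ∈ u, x ≤ b}) ∈ U := by
      intro b
      refine hcomplete _ (lt_of_le_of_lt Cardinal.mk_image_le (hsmallset b)) ?_
      rintro _ ⟨u, _, rfl⟩
      exact hC u
    have hD := hnormal (fun b => ⋂₀ (C '' {u | ∀ x ∈ u, x ≤ b})) hX
    refine ⟨{a | ∀ b < a, a ∈ ⋂₀ (C '' {u | ∀ x ∈ u, x ≤ b})} ∩ C ∅, inter_mem hD (hC ∅), ?_⟩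
    rintro a ⟨ha1, ha2⟩ u hu
    rcases u.eq_empty_or_nonempty with rfl | hne
    · exact ha2
    · have hb : u.max' hne < a := hu _ (u.max'_mem hne)
      exact ha1 _ hb _ ⟨u, fun x hx => u.le_max' x hx, rfl⟩
  -- symmDiff with a fresh singleton is insert
  have hins : ∀ (t : Finset κ.ord.ToType) (α : κ.ord.ToType), α ∉ t → t ∆ {α} = insert α t := by
    intro t α h
    ext x
    by_cases hx : x = α
    · subst hx; simp [Finset.mem_symmDiff, h]
    · simp [Finset.mem_symmDiff, hx]
  -- the one-step extension lemma
  have hstep : ∀ s : Finset κ.ord.ToType, s ∈ closure V →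
      {α | (∀ x ∈ s, x < α) → insert α s ∈ closure V} ∈ U := by
    intro s hs
    by_contra hN
    have hN' : {α | (∀ x ∈ s, x < α) ∧ insert α s ∉ closure V} ∈ U := by
      have h := Ultrafilter.compl_mem_iff_notMem.2 hN
      have heq : {α | (∀ x ∈ s, x < α) → insert α s ∈ closure V}ᶜ
          = {α | (∀ x ∈ s, x < α) ∧ insert α s ∉ closure V} := by
        ext α
        simp only [Set.mem_compl_iff, Set.mem_setOf_eq]
        push_neg
        rfl
      rwa [heq] at h
    have hB : ∀ α : κ.ord.ToType, ∃ B ∈ U, insert α s ∉ closure V →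
        ∀ w : Finset κ.ord.ToType, (∀ x ∈ w, x ∈ B) → insert α s ∆ w ∉ V := by
      intro α
      by_cases hα : insert α s ∈ closure V
      · exact ⟨Set.univ, Filter.univ_mem, fun h => absurd hα h⟩
      · have h := (hclmem (insert α s)).not.1 hα
        push_neg at h
        obtain ⟨A, hA, hAprop⟩ := h
        exact ⟨A, hA, fun _ w hw => hAprop w hw⟩
    choose B hBU hBprop using hB
    have hD : {a | ∀ b < a, a ∈ B b} ∈ U := hnormal B hBU
    have hB'U : ({α | (∀ x ∈ s, x < α) ∧ insert α s ∉ closure V}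
        ∩ {a | ∀ b < a, a ∈ B b}) ∈ U := inter_mem hN' hD
    obtain ⟨w, hw, hwV⟩ := (hclmem s).1 hs _ hB'U
    rcases w.eq_empty_or_nonempty with rfl | hne
    · -- s itself is in V; use openness of V
      have hsV : s ∈ V := by rwa [hsd_empty s] at hwV
      obtain ⟨A, hAU, hA⟩ := (hmemnhds V s).1 (hV.mem_nhds hsV)
      obtain ⟨α, hαA, hαB'⟩ := Filter.nonempty_of_mem (inter_mem hAU hB'U)
      have h1 : s ∆ {α} ∈ V := hA {α} (by simpa using hαA)
      have hαs : α ∉ s := fun h => lt_irrefl α (hαB'.1.1 α h)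
      rw [hins s α hαs] at h1
      exact hαB'.1.2 (subset_closure h1)
    · set α := w.min' hne with hα
      have hαw : α ∈ w := w.min'_mem hne
      have hαB' := hw α hαw
      have hαs : α ∉ s := fun h => lt_irrefl α (hαB'.1.1 α h)
      have herase : ∀ x ∈ w.erase α, x ∈ B α := by
        intro x hx
        have hxw : x ∈ w := Finset.mem_of_mem_erase hx
        have hxα : α < x := lt_of_le_of_ne (w.min'_le x hxw) (Ne.symm (Finset.ne_of_mem_erase hx))
        exact (hw x hxw).2 α hxα
      have hkey : s ∆ w = insert α s ∆ (w.erase α) := by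
        have h1 : (w.erase α) ∆ ({α} : Finset κ.ord.ToType) = w := by
          rw [hins _ α (Finset.notMem_erase α w)]
          exact Finset.insert_erase hαw
        calc s ∆ w = s ∆ ((w.erase α) ∆ {α}) := by rw [h1]
          _ = s ∆ (({α} : Finset κ.ord.ToType) ∆ (w.erase α)) := by rw [symmDiff_comm (w.erase α)]
          _ = (s ∆ {α}) ∆ (w.erase α) := by rw [symmDiff_assoc]
          _ = insert α s ∆ (w.erase α) := by rw [hins s α hαs]
      rw [hkey] at hwV
      exact hBprop α hαB'.1.2 (w.erase α) herase hwV
  -- main argument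
  rw [isOpen_iff_mem_nhds]
  intro s hs
  rw [hmemnhds]
  set C : Finset κ.ord.ToType → Set κ.ord.ToType := fun u =>
    {α | s ∆ u ∈ closure V → ((∀ x ∈ s ∆ u, x < α) → insert α (s ∆ u) ∈ closure V)} with hCdef
  have hCU : ∀ u, C u ∈ U := by
    intro u
    by_cases h : s ∆ u ∈ closure V
    · exact Filter.mem_of_superset (hstep _ h) (fun α hα h' => hα)
    · exact Filter.mem_of_superset Filter.univ_mem (fun α _ h' => absurd h' h)
  obtain ⟨A, hAU, hA⟩ := hdiag C hCU
  refine ⟨A ∩ {α | ∀ x ∈ s, x < α}, inter_mem hAU (htails s), ?_⟩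
  intro w
  induction w using Finset.induction_on_max with
  | empty => intro _; rw [hsd_empty s]; exact hs
  | insert a u hau ih =>
    intro hsub
    have hu : ∀ x ∈ u, x ∈ A ∩ {α | ∀ x ∈ s, x < α} :=
      fun x hx => hsub x (Finset.mem_insert_of_mem hx)
    have haA : a ∈ A ∩ {α | ∀ x ∈ s, x < α} := hsub a (Finset.mem_insert_self a u)
    have h1 : s ∆ u ∈ closure V := ih hu
    have hlt : ∀ x ∈ s ∆ u, x < a := by
      intro x hx
      rcases Finset.mem_symmDiff.1 hx with ⟨hxs, _⟩ | ⟨hxu, _⟩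
      · exact haA.2 x hxs
      · exact hau x hxu
    have ha2 : a ∈ C u := hA a haA.1 u hau
    have h3 : insert a (s ∆ u) ∈ closure V := ha2 h1 hlt
    have hnotin : a ∉ s ∆ u := fun h => lt_irrefl a (hlt a h)
    have hanotu : a ∉ u := fun h => lt_irrefl a (hau a h)
    have h4 : s ∆ insert a u = insert a (s ∆ u) := by
      calc s ∆ insert a u = s ∆ (u ∆ {a}) := by rw [hins u a hanotu]
        _ = (s ∆ u) ∆ {a} := by rw [symmDiff_assoc]
        _ = insert a (s ∆ u) := hins _ a hnotin
    rw [h4]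
    exact h3
end

section
/- Let κ be a measurable cardinal and U a κ-complete nonprincipal ultrafilter on κ. Then every subset of B(κ_U) of cardinality less than κ is closed and discrete. -/
open Cardinal Ordinal Filter Set
open scoped symmDiff

/-- For a κ-complete nonprincipal ultrafilter U on a measurable cardinal κ,
every subset of B(κ_U) of cardinality less than κ is closed and discrete. -/
theorem stmt_16 (κ : Cardinal.{0}) (hκ : Cardinal.aleph0 < κ)
    (U : Ultrafilter κ.ord.ToType)
    (hnonprincipal : ∀ x, U ≠ pure x)
    (hcomplete : ∀ S : Set (Set κ.ord.ToType), #S < κ → (∀ s ∈ S, s ∈ U) → ⋂₀ S ∈ U)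
    (τ : TopologicalSpace (Finset κ.ord.ToType))
    (hcont : @Continuous (Finset κ.ord.ToType × Finset κ.ord.ToType) (Finset κ.ord.ToType)
      (@instTopologicalSpaceProd _ _ τ τ) τ (fun p => p.1 ∆ p.2))
    (hbasis : (@nhds _ τ ∅).HasBasis (· ∈ U)
      (fun A => {s : Finset κ.ord.ToType | ∀ x ∈ s, x ∈ A})) :
    ∀ D : Set (Finset κ.ord.ToType), #D < κ →
      @IsClosed _ τ D ∧ ∀ s ∈ D, ∃ V : Set (Finset κ.ord.ToType),
        @IsOpen _ τ V ∧ V ∩ D = {s} := by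
  letI := τ
  intro D hD
  -- complements of small sets are in U
  have hsmall : ∀ B : Set κ.ord.ToType, #B < κ → Bᶜ ∈ U := by
    intro B hB
    have h1 : ∀ x : κ.ord.ToType, ({x}ᶜ : Set _) ∈ U := by
      intro x
      rw [Ultrafilter.compl_mem_iff_notMem]
      intro hx
      apply hnonprincipal x
      apply Ultrafilter.coe_injective
      apply Filter.ext
      intro s
      simp only [Ultrafilter.coe_pure, mem_pure]
      constructor
      · intro hs
        have hne := Ultrafilter.nonempty_of_mem (U.inter_mem hs hx)
        obtain ⟨y, hy1, hy2⟩ := hne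
        rw [mem_singleton_iff] at hy2
        exact hy2 ▸ hy1
      · intro hxs
        exact U.toFilter.mem_of_superset hx (singleton_subset_iff.2 hxs)
    have heq : ⋂₀ ((fun x => ({x}ᶜ : Set κ.ord.ToType)) '' B) = Bᶜ := by
      ext y
      simp only [mem_sInter, mem_image, forall_exists_index, and_imp, mem_compl_iff,
        mem_singleton_iff]
      constructor
      · intro h hy
        exact h ({y}ᶜ) y hy rfl rfl
      · rintro h s x hx rfl hyx
        rw [mem_singleton_iff] at hyx
        exact h (hyx ▸ hx)
    rw [← heq]
    apply hcomplete
    · exact lt_of_le_of_lt Cardinal.mk_image_le hB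
    · rintro s ⟨x, -, rfl⟩
      exact h1 x
  -- key: every point t has a neighborhood meeting D only possibly in t
  have key : ∀ t : Finset κ.ord.ToType, ∃ W ∈ @nhds _ τ t, W ∩ D ⊆ {t} := by
    intro t
    set B : Set κ.ord.ToType := ⋃ s ∈ insert t D, (↑s : Set κ.ord.ToType) with hBdef
    have h1 : #((insert t D : Set (Finset κ.ord.ToType))) < κ := by
      refine lt_of_le_of_lt (Cardinal.mk_insert_le) ?_
      exact Cardinal.add_lt_of_lt hκ.le hD (lt_trans Cardinal.one_lt_aleph0 hκ)
    have hBcard : #B < κ := by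
      refine lt_of_le_of_lt ((Cardinal.mk_biUnion_le _ _).trans ?_)
        (Cardinal.mul_lt_of_lt hκ.le h1 hκ)
      gcongr
      refine ciSup_le' fun x => ?_
      exact Cardinal.mk_le_aleph0
    have hA : Bᶜ ∈ U := hsmall B hBcard
    have hN : {s : Finset κ.ord.ToType | ∀ x ∈ s, x ∈ Bᶜ} ∈ @nhds _ τ ∅ :=
      hbasis.mem_of_mem hA
    have hct : Continuous (fun u : Finset κ.ord.ToType => t ∆ u) :=
      hcont.comp (continuous_const.prodMk continuous_id)
    have ht0 : t ∆ t = (∅ : Finset κ.ord.ToType) := by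
      rw [symmDiff_self]; rfl
    have hW : (fun u : Finset κ.ord.ToType => t ∆ u) ⁻¹'
        {s : Finset κ.ord.ToType | ∀ x ∈ s, x ∈ Bᶜ} ∈ @nhds _ τ t := by
      refine hct.continuousAt.preimage_mem_nhds ?_
      rw [ht0]; exact hN
    refine ⟨_, hW, ?_⟩
    rintro u ⟨hu, huD⟩
    have hsd : t ∆ u = (∅ : Finset κ.ord.ToType) := by
      by_contra h
      obtain ⟨x, hx⟩ := Finset.nonempty_iff_ne_empty.2 h
      have hxB : x ∈ Bᶜ := hu x hx
      apply hxB
      rcases Finset.mem_symmDiff.1 hx with ⟨hxt, -⟩ | ⟨hxu, -⟩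
      · exact Set.mem_biUnion (Set.mem_insert _ _) hxt
      · exact Set.mem_biUnion (Set.mem_insert_of_mem _ huD) hxu
    have htu : t = u := by
      rw [← Finset.bot_eq_empty] at hsd
      exact symmDiff_eq_bot.1 hsd
    simp [← htu]
  constructor
  · rw [← isOpen_compl_iff, isOpen_iff_mem_nhds]
    intro t ht
    obtain ⟨W, hW, hWD⟩ := key t
    filter_upwards [hW] with u hu huD
    have := hWD ⟨hu, huD⟩
    rw [mem_singleton_iff] at this
    exact ht (this ▸ huD)
  · intro s hs
    obtain ⟨W, hW, hWD⟩ := key s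
    refine ⟨interior W, isOpen_interior, ?_⟩
    apply Subset.antisymm
    · rintro u ⟨hu, huD⟩
      exact hWD ⟨interior_subset hu, huD⟩
    · intro u hu
      rw [mem_singleton_iff] at hu
      subst hu
      exact ⟨mem_interior_iff_mem_nhds.2 hW, hs⟩
end

section
/- Let U be a σ-complete (countably complete) ultrafilter on κ, and let B(κ_U) be the Boolean group of finite subsets of κ with neighborhood base at zero {[A]^{<ω} : A ∈ U}. If ∅ is in the closure of an open set V ⊆ B(κ_U) with ∅ ∉ V, then there exists a positive integer k such that ∅ is in the closure of V ∩ [κ]^k. -/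
open Cardinal Ordinal Filter Set
open scoped symmDiff

/-- For a σ-complete ultrafilter U on κ, if ∅ lies in the closure of an open
set V of B(κ_U) with ∅ ∉ V, then ∅ lies in the closure of V ∩ [κ]^k for some k ≥ 1. -/
theorem stmt_17 (κ : Cardinal.{0}) (hκ : Cardinal.aleph0 ≤ κ)
    (U : Ultrafilter κ.ord.ToType)
    (hsigma : ∀ f : ℕ → Set κ.ord.ToType, (∀ n, f n ∈ U) → (⋂ n, f n) ∈ U)
    (τ : TopologicalSpace (Finset κ.ord.ToType))
    (hcont : @Continuous (Finset κ.ord.ToType × Finset κ.ord.ToType) (Finset κ.ord.ToType)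
      (@instTopologicalSpaceProd _ _ τ τ) τ (fun p => p.1 ∆ p.2))
    (hbasis : (@nhds _ τ ∅).HasBasis (· ∈ U)
      (fun A => {s : Finset κ.ord.ToType | ∀ x ∈ s, x ∈ A}))
    (V : Set (Finset κ.ord.ToType)) (hV : @IsOpen _ τ V)
    (hcl : (∅ : Finset κ.ord.ToType) ∈ @closure _ τ V)
    (hnot : (∅ : Finset κ.ord.ToType) ∉ V) :
    ∃ k : ℕ, 0 < k ∧
      (∅ : Finset κ.ord.ToType) ∈ @closure _ τ (V ∩ {s : Finset κ.ord.ToType | s.card = k}) := by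
  by_contra h
  push_neg at h
  have hx : ∀ k : ℕ, ∃ A ∈ U, ∀ s ∈ V, s.card = k + 1 → ¬ ∀ x ∈ s, x ∈ A := by
    intro k
    have hk := h (k + 1) (Nat.succ_pos k)
    rw [mem_closure_iff_nhds] at hk
    push_neg at hk
    obtain ⟨t, ht, hdisj⟩ := hk
    rw [hbasis.mem_iff] at ht
    obtain ⟨A, hA, hsub⟩ := ht
    exact ⟨A, hA, fun s hsV hcard hsA => Set.eq_empty_iff_forall_notMem.mp hdisj s ⟨hsub hsA, hsV, hcard⟩⟩
  choose A hAU hAspec using hx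
  have hmem : (⋂ n, A n) ∈ U := hsigma A hAU
  rw [mem_closure_iff_nhds] at hcl
  obtain ⟨s, hs1, hs2⟩ := hcl _ (hbasis.mem_of_mem hmem)
  have hne : s ≠ ∅ := fun hs => hnot (hs ▸ hs2)
  have hpos : 0 < s.card := Finset.card_pos.mpr (Finset.nonempty_iff_ne_empty.mpr hne)
  exact hAspec (s.card - 1) s hs2 (by omega)
    (fun x hx => Set.mem_iInter.mp (hs1 x hx) _)
end

section
/- For every measurable cardinal κ there exists a nondiscrete Hausdorff extremally disconnected topological group of cardinality κ. -/
open Cardinal Ordinal Filter Set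

namespace Stmt18

variable {X : Type} [LinearOrder X]
set_option linter.unusedSectionVars false
set_option linter.unusedVariables false

abbrev G (X : Type) : Type := X →₀ ZMod 2

lemma zmod2_add_self : ∀ a : ZMod 2, a + a = 0 := by decide

lemma zmod2_eq_one' : ∀ a : ZMod 2, a ≠ 0 → a = 1 := by decide

lemma zmod2_eq_one {a : ZMod 2} (h : a ≠ 0) : a = 1 := zmod2_eq_one' a h

lemma G_add_self (g : G X) : g + g = 0 := by
  ext x; simp [zmod2_add_self (g x)]

lemma G_neg (g : G X) : -g = g := by
  rw [neg_eq_iff_add_eq_zero, G_add_self]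

lemma G_add_cancel (x y : G X) : x + (x + y) = y := by
  rw [← add_assoc, G_add_self, zero_add]

/-- The subgroup of functions supported on `A`. -/
def SA (A : Set X) : Set (G X) := {f | ∀ x, f x ≠ 0 → x ∈ A}

lemma zero_mem_SA (A : Set X) : (0 : G X) ∈ SA A := by
  intro x hx; simp at hx

lemma add_mem_SA {A : Set X} {f g : G X} (hf : f ∈ SA A) (hg : g ∈ SA A) : f + g ∈ SA A := by
  intro x hx
  rw [Finsupp.add_apply] at hx
  by_cases h : f x ≠ 0
  · exact hf x h
  · push_neg at h
    exact hg x (by simpa [h] using hx)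

lemma SA_mono {A B : Set X} (h : A ⊆ B) : SA A ⊆ SA B := fun f hf x hx => h (hf x hx)

lemma SA_inter (A B : Set X) : SA (A ∩ B) ⊆ SA A ∩ SA B :=
  fun f hf => ⟨fun x hx => (hf x hx).1, fun x hx => (hf x hx).2⟩

variable (D : Ultrafilter X)

/-- The additive group filter basis given by the subgroups `SA A`, `A ∈ D`. -/
noncomputable def basis : AddGroupFilterBasis (G X) :=
  addGroupFilterBasisOfComm {S | ∃ A ∈ D, S = SA A}
    ⟨SA univ, ⟨univ, univ_mem, rfl⟩⟩
    (by
      rintro _ _ ⟨A, hA, rfl⟩ ⟨B, hB, rfl⟩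
      exact ⟨SA (A ∩ B), ⟨A ∩ B, inter_mem hA hB, rfl⟩, SA_inter A B⟩)
    (by rintro _ ⟨A, hA, rfl⟩; exact zero_mem_SA A)
    (by
      rintro _ ⟨A, hA, rfl⟩
      refine ⟨SA A, ⟨A, hA, rfl⟩, ?_⟩
      rintro x ⟨a, ha, b, hb, rfl⟩
      exact add_mem_SA ha hb)
    (by
      rintro _ ⟨A, hA, rfl⟩
      refine ⟨SA A, ⟨A, hA, rfl⟩, ?_⟩
      intro x hx
      simpa [Set.mem_preimage, G_neg] using hx)

/-- The topology. -/
noncomputable def τ : TopologicalSpace (G X) := (basis D).topology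

lemma nhds_basis (x : G X) :
    (@nhds _ (τ D) x).HasBasis (fun A : Set X => A ∈ D) (fun A => (x + ·) '' SA A) := by
  have h := (basis D).nhds_hasBasis x
  refine h.to_hasBasis ?_ ?_
  · rintro _ ⟨A, hA, rfl⟩
    exact ⟨A, hA, subset_rfl⟩
  · intro A hA
    exact ⟨SA A, ⟨A, hA, rfl⟩, subset_rfl⟩

lemma mem_translate {x y : G X} {A : Set X} : y ∈ (x + ·) '' SA A ↔ x + y ∈ SA A := by
  constructor
  · rintro ⟨s, hs, rfl⟩
    rwa [G_add_cancel]
  · intro h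
    exact ⟨x + y, h, G_add_cancel x y⟩

lemma mem_closure_iff' (V : Set (G X)) (x : G X) :
    x ∈ @closure _ (τ D) V ↔ ∀ A ∈ D, ∃ g ∈ V, x + g ∈ SA A := by
  letI := τ D
  rw [mem_closure_iff_nhds_basis (nhds_basis D x)]
  constructor
  · intro h A hA
    obtain ⟨g, hg, hmem⟩ := h A hA
    exact ⟨g, hg, mem_translate.mp hmem⟩
  · intro h A hA
    obtain ⟨g, hg, hmem⟩ := h A hA
    exact ⟨g, hg, mem_translate.mpr hmem⟩

lemma isOpen_iff' (V : Set (G X)) :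
    @IsOpen _ (τ D) V ↔ ∀ x ∈ V, ∃ A ∈ D, ∀ g, x + g ∈ SA A → g ∈ V := by
  letI := τ D
  rw [isOpen_iff_mem_nhds]
  refine forall₂_congr fun x hx => ?_
  rw [(nhds_basis D x).mem_iff]
  constructor
  · rintro ⟨A, hA, hsub⟩
    exact ⟨A, hA, fun g hg => hsub (mem_translate.mpr hg)⟩
  · rintro ⟨A, hA, h⟩
    exact ⟨A, hA, fun g hg => h g (mem_translate.mp hg)⟩


set_option maxHeartbeats 1000000

lemma support_add_single {p : G X} {β : X} (hβ : β ∈ p.support) :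
    (p + Finsupp.single β 1).support = p.support.erase β := by
  ext x
  rcases eq_or_ne x β with rfl | hx
  · simp only [Finsupp.mem_support_iff, Finsupp.add_apply, Finsupp.single_eq_same,
      Finset.mem_erase, ne_eq, not_true_eq_false, false_and, iff_false, not_not]
    rw [zmod2_eq_one (Finsupp.mem_support_iff.mp hβ)]
    decide
  · simp [Finsupp.mem_support_iff, Finsupp.add_apply, Finsupp.single_eq_of_ne (Ne.symm hx), hx]

lemma add_single_self {p : G X} {β : X} : p + Finsupp.single β 1 + Finsupp.single β 1 = p := by
  rw [add_assoc]
  have : (Finsupp.single β 1 + Finsupp.single β 1 : G X) = 0 := by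
    ext x; simp only [Finsupp.add_apply, Finsupp.coe_zero, Pi.zero_apply]
    rcases eq_or_ne β x with rfl|h
    · simp only [Finsupp.single_eq_same]; decide
    · simp [Finsupp.single_eq_of_ne' h]
  rw [this, add_zero]

lemma mem_SA_iff_support {f : G X} {A : Set X} : f ∈ SA A ↔ ↑f.support ⊆ A := by
  constructor
  · intro h x hx
    exact h x (Finsupp.mem_support_iff.mp hx)
  · intro h x hx
    exact h (Finsupp.mem_support_iff.mpr hx)

variable (D : Ultrafilter X)

/-- One-step lemma: if `f` is in the closure of an open `V`, then for `D`-almost all `α`,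
`f + e_α` is in the closure of `V`. -/
lemma step1 (hpt : ∀ F : Finset X, (↑F : Set X)ᶜ ∈ D)
    (hdiag : ∀ A : X → Set X, (∀ γ, A γ ∈ D) → {β | ∀ γ, γ < β → β ∈ A γ} ∈ D)
    {V : Set (G X)} (hV : @IsOpen _ (τ D) V) {f : G X} (hf : f ∈ @closure _ (τ D) V) :
    {α : X | f + Finsupp.single α 1 ∈ @closure _ (τ D) V} ∈ D := by
  classical
  letI := τ D
  by_cases hfV : f ∈ V
  · obtain ⟨A, hA, hAsub⟩ := (isOpen_iff' D V).mp hV f hfV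
    refine mem_of_superset (inter_mem hA (hpt f.support)) ?_
    rintro α ⟨hαA, hαs⟩
    refine subset_closure (hAsub (f + Finsupp.single α 1) ?_)
    rw [G_add_cancel, mem_SA_iff_support]
    intro x hx
    rw [Finsupp.support_single_ne_zero α (by decide)] at hx
    simp only [Finset.coe_singleton, mem_singleton_iff] at hx
    rwa [hx]
  · by_contra hT
    have hT' : {α : X | f + Finsupp.single α 1 ∉ @closure _ (τ D) V} ∈ D := by
      have := (Ultrafilter.compl_mem_iff_notMem (f := D)
        (s := {α : X | f + Finsupp.single α 1 ∈ @closure _ (τ D) V})).mpr hT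
      simpa [compl_setOf] using this
    have hC : ∀ α : X, ∃ C ∈ D, (f + Finsupp.single α 1 ∉ @closure _ (τ D) V) →
        ∀ g ∈ V, f + Finsupp.single α 1 + g ∉ SA C := by
      intro α
      by_cases h : f + Finsupp.single α 1 ∈ @closure _ (τ D) V
      · exact ⟨univ, univ_mem, fun h' => absurd h h'⟩
      · rw [mem_closure_iff' D] at h
        push_neg at h
        obtain ⟨A, hA, hAdisj⟩ := h
        exact ⟨A, hA, fun _ g hg => hAdisj g hg⟩
    choose C hCD hCdisj using hC
    have hΔ : {β : X | ∀ γ, γ < β → β ∈ C γ} ∈ D := hdiag C hCD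
    have hA₀ : {α : X | f + Finsupp.single α 1 ∉ @closure _ (τ D) V} ∩
        {β : X | ∀ γ, γ < β → β ∈ C γ} ∩ (↑f.support : Set X)ᶜ ∈ D :=
      inter_mem (inter_mem hT' hΔ) (hpt f.support)
    obtain ⟨g, hgV, hgSA⟩ := (mem_closure_iff' D V f).mp hf _ hA₀
    rw [mem_SA_iff_support] at hgSA
    set E := (f + g).support with hE
    have hEne : E.Nonempty := by
      rcases Finset.eq_empty_or_nonempty E with h | h
      · exfalso
        have : f + g = 0 := by
          rwa [← Finsupp.support_eq_empty]
        have hgf : f = g := by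
          simpa [G_add_cancel] using (congrArg (f + ·) this).symm
        rw [hgf] at hfV
        exact hfV hgV
      · exact h
    set α := E.min' hEne with hα
    have hαE : α ∈ E := E.min'_mem hEne
    have hαA₀ := hgSA hαE
    obtain ⟨⟨hαT, hαΔ⟩, hαs⟩ := hαA₀
    refine hCdisj α hαT g hgV ?_
    rw [mem_SA_iff_support]
    intro x hx
    have hfg : (f + Finsupp.single α 1 + g) = (f + g) + Finsupp.single α 1 := by abel
    rw [hfg, support_add_single hαE] at hx
    have hxE : x ∈ E := Finset.mem_of_mem_erase hx
    have hxα : x ≠ α := (Finset.mem_erase.mp hx).1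
    have hαx : α < x := lt_of_le_of_ne (E.min'_le x hxE) (Ne.symm hxα)
    have := hgSA hxE
    exact this.1.2 α hαx

/-- The core extremal disconnectedness result. -/
lemma edcore (hpt : ∀ F : Finset X, (↑F : Set X)ᶜ ∈ D)
    (hdiag : ∀ A : X → Set X, (∀ γ, A γ ∈ D) → {β | ∀ γ, γ < β → β ∈ A γ} ∈ D)
    (hcap : ∀ (α : X) (c : G X → Set X), (∀ p, c p ∈ D) →
      ⋂ p ∈ {p : G X | ∀ x ∈ p.support, x ≤ α}, c p ∈ D)
    (V : Set (G X)) (hV : @IsOpen _ (τ D) V) : @IsOpen _ (τ D) (@closure _ (τ D) V) := by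
  classical
  letI := τ D
  rw [isOpen_iff']
  intro f hf
  set W := @closure _ (τ D) V with hW
  let c : G X → Set X := fun h =>
    if h ∈ W then {α : X | h + Finsupp.single α 1 ∈ W} else univ
  have hc : ∀ h, c h ∈ D := by
    intro h
    by_cases hh : h ∈ W
    · simpa only [c, if_pos hh] using step1 D hpt hdiag hV hh
    · simp only [c, if_neg hh]; exact univ_mem
  have hcW : ∀ h ∈ W, ∀ α, α ∈ c h → h + Finsupp.single α 1 ∈ W := by
    intro h hh α hα
    simpa only [c, if_pos hh, mem_setOf_eq] using hα
  let Bg : X → Set X := fun γ => ⋂ p ∈ {p : G X | ∀ x ∈ p.support, x ≤ γ}, c (f + p)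
  have hBg : ∀ γ, Bg γ ∈ D := fun γ => hcap γ (fun p => c (f + p)) (fun p => hc _)
  have hA : {β : X | ∀ γ, γ < β → β ∈ Bg γ} ∩ c f ∩ (↑f.support : Set X)ᶜ ∈ D :=
    inter_mem (inter_mem (hdiag Bg hBg) (hc f)) (hpt f.support)
  refine ⟨_, hA, ?_⟩
  intro g hg
  rw [mem_SA_iff_support] at hg
  -- strong induction on support cardinality
  have claim : ∀ n : ℕ, ∀ p : G X, p.support.card = n →
      (↑p.support : Set X) ⊆ {β : X | ∀ γ, γ < β → β ∈ Bg γ} ∩ c f ∩ (↑f.support : Set X)ᶜ →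
      f + p ∈ W := by
    intro n
    induction n using Nat.strong_induction_on with
    | _ n ih =>
      intro p hcard hsupp
      rcases Nat.eq_zero_or_pos n with rfl | hn
      · have : p = 0 := by
          rw [← Finsupp.support_eq_empty, ← Finset.card_eq_zero, hcard]
        rw [this, add_zero]
        exact hf
      · have hne : p.support.Nonempty := by
          rw [← Finset.card_pos, hcard]; exact hn
        set β := p.support.max' hne with hβ
        have hβs : β ∈ p.support := p.support.max'_mem hne
        set p' := p + Finsupp.single β 1 with hp'
        have hp's : p'.support = p.support.erase β := support_add_single hβs
        have hcard' : p'.support.card = n - 1 := by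
          rw [hp's, Finset.card_erase_of_mem hβs, hcard]
        have hsub' : (↑p'.support : Set X) ⊆ (↑p.support : Set X) := by
          rw [hp's]; intro x hx
          exact Finset.mem_of_mem_erase (by exact_mod_cast hx)
        have hWp' : f + p' ∈ W :=
          ih (n - 1) (by omega) p' hcard' (fun x hx => hsupp (hsub' hx))
        have hβA := hsupp (by exact_mod_cast hβs)
        obtain ⟨⟨hβBg, hβcf⟩, hβfs⟩ := hβA
        have key : β ∈ c (f + p') := by
          rcases Finset.eq_empty_or_nonempty p'.support with hemp | hne'
          · have : p' = 0 := Finsupp.support_eq_empty.mp hemp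
            rw [this, add_zero]
            exact hβcf
          · set γ := p'.support.max' hne' with hγ
            have hγs : γ ∈ p'.support := p'.support.max'_mem hne'
            have hγβ : γ < β := by
              have h1 : γ ∈ p.support.erase β := hp's ▸ hγs
              have h2 : γ ≠ β := (Finset.mem_erase.mp h1).1
              have h3 : γ ∈ p.support := Finset.mem_of_mem_erase h1
              exact lt_of_le_of_ne (p.support.le_max' γ h3) h2
            have hmem : p' ∈ {q : G X | ∀ x ∈ q.support, x ≤ γ} := by
              intro x hx
              exact p'.support.le_max' x hx
            have := hβBg γ hγβ
            simp only [Bg, mem_iInter] at this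
            exact this p' hmem
        have hps : p' + Finsupp.single β 1 = p := by rw [hp']; exact add_single_self
        have hmemW : (f + p') + Finsupp.single β 1 ∈ W := hcW _ hWp' β key
        rw [add_assoc, hps] at hmemW
        exact hmemW
  have := claim (f + g).support.card (f + g) rfl hg
  rwa [G_add_cancel] at this



/-- From a κ-complete nonprincipal ultrafilter, get a normal one. -/
lemma exists_normal {X : Type} [LinearOrder X] [WellFoundedLT X] (κ : Cardinal.{0})
    (hκ : Cardinal.aleph0 < κ) (U : Ultrafilter X)
    (hnp : ∀ x, U ≠ pure x)
    (hcomp : ∀ S : Set (Set X), #S < κ → (∀ s ∈ S, s ∈ U) → ⋂₀ S ∈ U) :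
    ∃ D : Ultrafilter X, (∀ x, D ≠ pure x) ∧
      (∀ S : Set (Set X), #S < κ → (∀ s ∈ S, s ∈ D) → ⋂₀ S ∈ D) ∧
      (∀ g : X → X, {α | g α < α} ∈ D → ∃ γ, {α | g α = γ} ∈ D) := by
  classical
  set r : (X → X) → (X → X) → Prop := fun f g => {α | f α < g α} ∈ U with hr
  haveI : IsIrrefl (X → X) r := ⟨by
    intro f hf
    have hempty : {α : X | f α < f α} = ∅ := by ext α; simp
    rw [hr] at hf
    simp only [hempty] at hf
    exact Ultrafilter.empty_notMem hf⟩
  haveI : IsTrans (X → X) r := ⟨by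
    intro f g h h1 h2
    exact mem_of_superset (inter_mem h1 h2) fun α hα => lt_trans hα.1 hα.2⟩
  haveI : IsStrictOrder (X → X) r := ⟨⟩
  have hwf : WellFounded r := by
    rw [RelEmbedding.wellFounded_iff_isEmpty]
    constructor
    intro e
    have hmem : ∀ n : ℕ, {α | e (n + 1) α < e n α} ∈ U := fun n =>
      e.map_rel_iff.mpr (Nat.lt_succ_self n)
    have hS : ⋂₀ (range fun n : ℕ => {α | e (n + 1) α < e n α}) ∈ U := by
      refine hcomp _ (lt_of_le_of_lt mk_range_le ?_) ?_
      · rwa [mk_nat]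
      · rintro _ ⟨n, rfl⟩; exact hmem n
    obtain ⟨α, hα⟩ := Ultrafilter.nonempty_of_mem hS
    have hdec : ∀ n : ℕ, (fun n => e n α) (n + 1) < (fun n => e n α) n := fun n =>
      hα _ ⟨n, rfl⟩
    exact RelEmbedding.not_wellFounded
      (RelEmbedding.natGT (fun n => e n α) hdec) wellFounded_lt
  have hid : (id : X → X) ∈ {f : X → X | ∀ x, U.map f ≠ pure x} := by
    intro x
    rw [Ultrafilter.map_id]
    exact hnp x
  obtain ⟨f₀, hf₀mem, hf₀min⟩ := hwf.has_min {f : X → X | ∀ x, U.map f ≠ pure x} ⟨id, hid⟩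
  refine ⟨U.map f₀, hf₀mem, ?_, ?_⟩
  · intro S hS hSD
    rw [Ultrafilter.mem_map]
    have heq : f₀ ⁻¹' ⋂₀ S = ⋂₀ ((fun s => f₀ ⁻¹' s) '' S) := by
      rw [sInter_image, preimage_sInter]
    rw [heq]
    refine hcomp _ (lt_of_le_of_lt mk_image_le hS) ?_
    rintro _ ⟨s, hs, rfl⟩
    exact Ultrafilter.mem_map.mp (hSD s hs)
  · intro g hg
    have hrgf : r (g ∘ f₀) f₀ := by
      have := Ultrafilter.mem_map.mp hg
      exact this
    have hnotmem : g ∘ f₀ ∉ {f : X → X | ∀ x, U.map f ≠ pure x} := fun hmem =>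
      hf₀min _ hmem hrgf
    simp only [mem_setOf_eq, not_forall, not_not] at hnotmem
    obtain ⟨γ, hγ⟩ := hnotmem
    refine ⟨γ, ?_⟩
    have hmm : (U.map f₀).map g = pure γ := by
      rw [Ultrafilter.map_map]; exact hγ
    have h1 : {γ} ∈ (U.map f₀).map g := by
      rw [hmm]; exact Ultrafilter.mem_pure.mpr rfl
    have h2 := Ultrafilter.mem_map.mp h1
    exact mem_of_superset h2 fun α hα => hα

lemma diag_of_normal {X : Type} [LinearOrder X] (D : Ultrafilter X)
    (hnorm : ∀ g : X → X, {α | g α < α} ∈ D → ∃ γ, {α | g α = γ} ∈ D)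
    (A : X → Set X) (hA : ∀ γ, A γ ∈ D) : {β | ∀ γ, γ < β → β ∈ A γ} ∈ D := by
  classical
  by_contra h
  have hC : {β : X | ∃ γ, γ < β ∧ β ∉ A γ} ∈ D := by
    have h2 := (Ultrafilter.compl_mem_iff_notMem (f := D)
      (s := {β | ∀ γ, γ < β → β ∈ A γ})).mpr h
    have : {β : X | ∀ γ, γ < β → β ∈ A γ}ᶜ = {β : X | ∃ γ, γ < β ∧ β ∉ A γ} := by
      ext β; simp [not_forall]
    rwa [this] at h2
  let g : X → X := fun β => if hb : ∃ γ, γ < β ∧ β ∉ A γ then hb.choose else β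
  have hgval : ∀ β : X, (∃ γ, γ < β ∧ β ∉ A γ) → g β < β ∧ β ∉ A (g β) := by
    intro β hb
    simp only [g]
    rw [dif_pos hb]
    exact ⟨hb.choose_spec.1, hb.choose_spec.2⟩
  have hglt : {β | g β < β} ∈ D := by
    refine mem_of_superset hC fun β hβ => ?_
    exact (hgval β hβ).1
  obtain ⟨γ₀, hγ₀⟩ := hnorm g hglt
  have hall : {β | g β = γ₀} ∩ {β : X | ∃ γ, γ < β ∧ β ∉ A γ} ∩ A γ₀ ∈ D :=
    inter_mem (inter_mem hγ₀ hC) (hA γ₀)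
  obtain ⟨β, ⟨hgβ, hb⟩, hmem⟩ := Ultrafilter.nonempty_of_mem hall
  have hspec := (hgval β hb).2
  rw [hgβ] at hspec
  exact hspec hmem



lemma card_supported_le {X : Type} (Y : Set X) :
    #{p : G X // ∀ x ∈ p.support, x ∈ Y} ≤ #(Finset Y) := by
  classical
  refine mk_le_of_injective (f := fun p => (p : G X).support.subtype (· ∈ Y)) ?_
  intro p q h
  have hsupp : (p : G X).support = (q : G X).support := by
    ext x
    by_cases hxY : x ∈ Y
    · have := Finset.ext_iff.mp h ⟨x, hxY⟩
      simpa [Finset.mem_subtype] using this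
    · constructor
      · intro hx; exact absurd (p.2 x hx) hxY
      · intro hx; exact absurd (q.2 x hx) hxY
  apply Subtype.ext
  ext x
  by_cases hx : x ∈ (p : G X).support
  · have hq : x ∈ (q : G X).support := hsupp ▸ hx
    rw [zmod2_eq_one (Finsupp.mem_support_iff.mp hx),
      zmod2_eq_one (Finsupp.mem_support_iff.mp hq)]
  · have hq : x ∉ (q : G X).support := hsupp ▸ hx
    rw [Finsupp.notMem_support_iff.mp hx, Finsupp.notMem_support_iff.mp hq]

lemma card_finset_lt {Y : Type} (κ : Cardinal.{0}) (hκ : Cardinal.aleph0 < κ)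
    (hY : #Y < κ) : #(Finset Y) < κ := by
  rcases finite_or_infinite Y with h | h
  · haveI : Fintype Y := Fintype.ofFinite Y
    exact lt_trans (lt_aleph0_of_finite (Finset Y)) hκ
  · rwa [mk_finset_of_infinite]

lemma card_Iic_lt (κ : Cardinal.{0}) (hκ : Cardinal.aleph0 < κ) (α : κ.ord.ToType) :
    #(Iic α) < κ := by
  have h1 : #(Iio α) < κ := mk_Iio_ord_toType α
  have h2 : Iic α = Iio α ∪ {α} := by
    ext x; simp [le_iff_lt_or_eq]
  rw [h2]
  refine lt_of_le_of_lt (mk_union_le _ _) ?_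
  rw [mk_singleton]
  exact Cardinal.add_lt_of_lt (le_of_lt hκ) h1 (lt_trans one_lt_aleph0 hκ)


end Stmt18

open Stmt18 in
/-- For every measurable cardinal κ there exists a nondiscrete Hausdorff
extremally disconnected topological group of cardinality κ. -/
theorem stmt_18 (κ : Cardinal.{0}) (hκ : Cardinal.aleph0 < κ)
    (hmeasurable : ∃ U : Ultrafilter κ.ord.ToType, (∀ x, U ≠ pure x) ∧
      ∀ S : Set (Set κ.ord.ToType), #S < κ → (∀ s ∈ S, s ∈ U) → ⋂₀ S ∈ U) :
    ∃ (G : Type) (g : AddCommGroup G) (τ : TopologicalSpace G),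
      @IsTopologicalAddGroup G τ g.toAddGroup ∧
      @T2Space G τ ∧
      τ ≠ ⊥ ∧
      (∀ V : Set G, @IsOpen G τ V → @IsOpen G τ (@closure G τ V)) ∧
      #G = κ := by
  classical
  obtain ⟨U, hUnp, hUcomp⟩ := hmeasurable
  obtain ⟨D, hDnp, hDcomp, hDnorm⟩ := exists_normal κ hκ U hUnp hUcomp
  have hsing : ∀ x : κ.ord.ToType, ({x} : Set κ.ord.ToType)ᶜ ∈ D := by
    intro x
    rw [Ultrafilter.compl_mem_iff_notMem]
    intro hx
    refine hDnp x (Ultrafilter.coe_injective ?_)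
    rw [Ultrafilter.coe_pure]
    exact (Filter.NeBot.eq_pure_iff D.neBot).mpr hx
  have hpt : ∀ F : Finset κ.ord.ToType, (↑F : Set κ.ord.ToType)ᶜ ∈ D := by
    intro F
    induction F using Finset.induction_on with
    | empty =>
      simp only [Finset.coe_empty, compl_empty]
      exact univ_mem
    | insert _ _ ha ih =>
      rw [Finset.coe_insert, Set.insert_eq, compl_union]
      exact inter_mem (hsing _) ih
  have hdiag := diag_of_normal D hDnorm
  have hcap : ∀ (α : κ.ord.ToType) (c : G κ.ord.ToType → Set κ.ord.ToType), (∀ p, c p ∈ D) →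
      ⋂ p ∈ {p : G κ.ord.ToType | ∀ x ∈ p.support, x ≤ α}, c p ∈ D := by
    intro α c hc
    rw [← sInter_image]
    refine hDcomp _ ?_ ?_
    · refine lt_of_le_of_lt mk_image_le ?_
      refine lt_of_le_of_lt (card_supported_le (Set.Iic α)) ?_
      exact card_finset_lt κ hκ (card_Iic_lt κ hκ α)
    · rintro _ ⟨p, hp, rfl⟩; exact hc p
  haveI : Infinite κ.ord.ToType := by
    rw [Cardinal.infinite_iff, mk_ord_toType]
    exact le_of_lt hκ
  refine ⟨G κ.ord.ToType, inferInstance, τ D, ?_, ?_, ?_, ?_, ?_⟩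
  · exact (basis D).isTopologicalAddGroup
  · letI := τ D
    haveI : IsTopologicalAddGroup (G κ.ord.ToType) := (basis D).isTopologicalAddGroup
    refine IsTopologicalAddGroup.t2Space_of_zero_sep ?_
    intro x hx
    obtain ⟨a, ha⟩ := Finsupp.support_nonempty_iff.mpr hx
    refine ⟨((0 : G κ.ord.ToType) + ·) '' SA ({a} : Set κ.ord.ToType)ᶜ, (nhds_basis D 0).mem_of_mem (hsing a), ?_⟩
    intro hmem
    rw [mem_translate, zero_add] at hmem
    exact (hmem a (Finsupp.mem_support_iff.mp ha)) rfl
  · intro hbot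
    have hopen : @IsOpen (G κ.ord.ToType) (τ D) {0} := by
      rw [hbot]
      exact @isOpen_discrete _ ⊥ (discreteTopology_bot _) _
    obtain ⟨A, hA, hAsub⟩ := (isOpen_iff' D {0}).mp hopen 0 rfl
    obtain ⟨a, ha⟩ := Ultrafilter.nonempty_of_mem hA
    have h1 : (0 : G κ.ord.ToType) + Finsupp.single a 1 ∈ SA A := by
      rw [zero_add, mem_SA_iff_support, Finsupp.support_single_ne_zero a (by decide)]
      intro x hxmem
      simp only [Finset.coe_singleton, mem_singleton_iff] at hxmem
      rwa [hxmem]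
    have h2 : Finsupp.single a (1 : ZMod 2) = 0 := hAsub _ h1
    have h3 := congrArg (fun p : G κ.ord.ToType => p a) h2
    simp only [Finsupp.single_eq_same, Finsupp.coe_zero, Pi.zero_apply] at h3
    exact absurd h3 (by decide)
  · intro V hV
    exact edcore D hpt hdiag hcap V hV
  · rw [mk_finsupp_of_infinite κ.ord.ToType (ZMod 2), mk_ord_toType]
    refine max_eq_left ?_
    exact le_of_lt (lt_trans (lt_aleph0_of_finite _) hκ)
end
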